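/- Given a disjunctive database D, there exists a unique disjunctive database D_min such that D_min has the same minimal models as D and D_min is contained in every disjunctive database having the same minimal models as D; namely D_min = reduction(D). -/
import Mathlib


variable {F : Type*} [DecidableEq F]

/-- M is a model of the disjunctive database D: it meets every disjunction. -/
def IsModel (D : Finset (Finset F)) (M : Finset F) : Prop :=
  ∀ d ∈ D, ∃ t ∈ d, t ∈ M

/-- M is a minimal model of D. -/
def IsMinModel (D : Finset (Finset F)) (M : Finset F) : Prop :=
  IsModel D M ∧ ∀ M' ⊂ M, ¬ IsModel D M'

/-- reduction removes every disjunction properly containing another disjunction of D. -/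
def reduction (D : Finset (Finset F)) : Finset (Finset F) :=
  D.filter (fun d => ∀ d' ∈ D, ¬ d' ⊂ d)

lemma model_mono {D : Finset (Finset F)} {M N : Finset F} (h : IsModel D M)
    (hMN : M ⊆ N) : IsModel D N := fun d hd => by
  obtain ⟨t, ht, htM⟩ := h d hd
  exact ⟨t, ht, hMN htM⟩

lemma exists_min_model {D : Finset (Finset F)} :
    ∀ M : Finset F, IsModel D M → ∃ N ⊆ M, IsMinModel D N := by
  intro M
  induction M using Finset.strongInductionOn with
  | _ M ih =>
    intro hM
    by_cases h : ∀ M' ⊂ M, ¬ IsModel D M'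
    · exact ⟨M, Finset.Subset.refl M, hM, h⟩
    · push_neg at h
      obtain ⟨M', hM', hmod⟩ := h
      obtain ⟨N, hNM', hN⟩ := ih M' hM' hmod
      exact ⟨N, hNM'.trans hM'.subset, hN⟩

lemma same_models_of_same_min {D D' : Finset (Finset F)}
    (h : ∀ M : Finset F, IsMinModel D M ↔ IsMinModel D' M) :
    ∀ M : Finset F, IsModel D M ↔ IsModel D' M := by
  intro M
  constructor
  · intro hM
    obtain ⟨N, hNM, hN⟩ := exists_min_model M hM
    exact model_mono ((h N).mp hN).1 hNM
  · intro hM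
    obtain ⟨N, hNM, hN⟩ := exists_min_model M hM
    exact model_mono ((h N).mpr hN).1 hNM

lemma exists_reduced_subset {D : Finset (Finset F)} {d : Finset F} (hd : d ∈ D) :
    ∃ d' ∈ reduction D, d' ⊆ d := by
  set S := D.filter (· ⊆ d) with hS
  have hdS : d ∈ S := Finset.mem_filter.mpr ⟨hd, Finset.Subset.refl d⟩
  obtain ⟨e, heS, hemin⟩ := S.exists_min_image (fun x => x.card) ⟨d, hdS⟩
  have heD : e ∈ D := (Finset.mem_filter.mp heS).1
  have hed : e ⊆ d := (Finset.mem_filter.mp heS).2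
  refine ⟨e, Finset.mem_filter.mpr ⟨heD, ?_⟩, hed⟩
  intro d'' hd'' hsub
  have : d'' ∈ S := Finset.mem_filter.mpr ⟨hd'', hsub.subset.trans hed⟩
  exact absurd (hemin d'' this) (not_le.mpr (Finset.card_lt_card hsub))

lemma model_reduction_iff {D : Finset (Finset F)} {M : Finset F} :
    IsModel (reduction D) M ↔ IsModel D M := by
  constructor
  · intro h d hd
    obtain ⟨d', hd', hsub⟩ := exists_reduced_subset hd
    obtain ⟨t, ht, htM⟩ := h d' hd'
    exact ⟨t, hsub ht, htM⟩
  · intro h d hd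
    exact h d (Finset.mem_filter.mp hd).1

lemma minModel_reduction_iff {D : Finset (Finset F)} {M : Finset F} :
    IsMinModel (reduction D) M ↔ IsMinModel D M := by
  unfold IsMinModel
  simp only [model_reduction_iff]

/-- positive implicate lemma -/
lemma exists_subset_of_entails {A : Finset (Finset F)} {c : Finset F}
    (h : ∀ M : Finset F, IsModel A M → ∃ t ∈ c, t ∈ M) : ∃ a ∈ A, a ⊆ c := by
  by_contra hc
  push_neg at hc
  set M := (A.biUnion id) \ c with hM
  have hmod : IsModel A M := by
    intro a ha
    obtain ⟨t, ht, htc⟩ := Finset.not_subset.mp (hc a ha)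
    exact ⟨t, ht, Finset.mem_sdiff.mpr ⟨Finset.mem_biUnion.mpr ⟨a, ha, ht⟩, htc⟩⟩
  obtain ⟨t, htc, htM⟩ := h M hmod
  exact (Finset.mem_sdiff.mp htM).2 htc

lemma reduction_subset_of_same_models {D D' : Finset (Finset F)}
    (h : ∀ M : Finset F, IsModel D M ↔ IsModel D' M) : reduction D ⊆ D' := by
  intro d hd
  have hdD : d ∈ D := (Finset.mem_filter.mp hd).1
  have hnored : ∀ d'' ∈ D, ¬ d'' ⊂ d := (Finset.mem_filter.mp hd).2
  -- every model of D' meets d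
  obtain ⟨d', hd', hsub⟩ := exists_subset_of_entails
    (fun M hM => ((h M).mpr hM) d hdD)
  -- every model of D meets d'
  obtain ⟨d'', hd'', hsub'⟩ := exists_subset_of_entails
    (fun M hM => ((h M).mp hM) d' hd')
  have hd''d : d'' ⊆ d := hsub'.trans hsub
  have heq : d'' = d := by
    by_contra hne
    exact hnored d'' hd'' (Finset.ssubset_iff_subset_ne.mpr ⟨hd''d, hne⟩)
  have hde : d' = d := Finset.Subset.antisymm hsub (heq ▸ hsub')
  rwa [← hde]

theorem stmt3 (D : Finset (Finset F)) (hD : ∀ d ∈ D, d.Nonempty) :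
    ∀ Dmin : Finset (Finset F),
      ((∀ d ∈ Dmin, d.Nonempty) ∧
       (∀ M : Finset F, IsMinModel Dmin M ↔ IsMinModel D M) ∧
       (∀ D' : Finset (Finset F), (∀ d ∈ D', d.Nonempty) →
         (∀ M : Finset F, IsMinModel D' M ↔ IsMinModel D M) → Dmin ⊆ D'))
      ↔ Dmin = reduction D := by
  intro Dmin
  constructor
  · rintro ⟨hne, hmin, hleast⟩
    apply Finset.Subset.antisymm
    · exact hleast (reduction D)
        (fun d hd => hD d (Finset.mem_filter.mp hd).1)
        (fun M => minModel_reduction_iff)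
    · have hsame : ∀ M : Finset F, IsModel D M ↔ IsModel Dmin M :=
        same_models_of_same_min (fun M => (hmin M).symm)
      exact reduction_subset_of_same_models hsame
  · rintro rfl
    refine ⟨fun d hd => hD d (Finset.mem_filter.mp hd).1,
      fun M => minModel_reduction_iff, ?_⟩
    intro D' hD' hminD'
    have hsame : ∀ M : Finset F, IsModel D M ↔ IsModel D' M :=
      same_models_of_same_min (fun M => (hminD' M).symm)
    exact reduction_subset_of_same_models hsame
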